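/- (Unconditional energy dissipation for the two-dimensional dimensionally-split scheme S2.) Let N ≥ 2, Δx, Δy, Δt > 0, H : ℝ → ℝ convex and differentiable, V ∈ ℝ^{N×N}, and w : ℤ² → ℝ with w(p,q) = w(−p,q) = w(p,−q). Suppose ρⁿ, ρ^{n+1/2}, ρⁿ⁺¹, ρ**, ρ*** ∈ ℝ^{N×N} satisfy: Step 1: ξ^{1/2}_{ij} = H'(ρ^{n+1/2}_{ij}) + V_{ij} + ΔxΔy·∑_{k,l=1}^{N} w(i−k,j−l)ρ**_{kl}; u_{i+1/2,j} = −(ξ^{1/2}_{i+1,j} − ξ^{1/2}_{ij})/Δx; F_{i+1/2,j} = ρ^{n+1/2}_{ij}u_{i+1/2,j}⁺ + ρ^{n+1/2}_{i+1,j}u_{i+1/2,j}⁻; F_{1/2,j} = F_{N+1/2,j} = 0; ρ^{n+1/2}_{ij} = ρⁿ_{ij} − (Δt/Δx)(F_{i+1/2,j} − F_{i−1/2,j}). Step 2: ξ^{1}_{ij} = H'(ρⁿ⁺¹_{ij}) + V_{ij} + ΔxΔy·∑_{k,l} w(i−k,j−l)ρ***_{kl}; v_{i,j+1/2} = −(ξ^{1}_{i,j+1}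 − ξ^{1}_{ij})/Δy; G_{i,j+1/2} = ρⁿ⁺¹_{ij}v_{i,j+1/2}⁺ + ρⁿ⁺¹_{i,j+1}v_{i,j+1/2}⁻; G_{i,1/2} = G_{i,N+1/2} = 0; ρⁿ⁺¹_{ij} = ρ^{n+1/2}_{ij} − (Δt/Δy)(G_{i,j+1/2} − G_{i,j−1/2}). Assume ρⁿ_{ij} ≥ 0 for all i,j. If one of the following holds: (i) ρ** = (ρⁿ + ρ^{n+1/2})/2 and ρ*** = (ρ^{n+1/2} + ρⁿ⁺¹)/2; (ii) ρ** = ρⁿ, ρ*** = ρ^{n+1/2}, and the kernel w is negative definite; (iii) ρ** = ρ^{n+1/2}, ρ*** = ρⁿ⁺¹, and the kernel w is positive definite; then E_Δ(ρⁿ⁺¹) ≤ E_Δ(ρⁿ), with no CFL restriction on Δt. -/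

import Mathlib

/-- Positive part `z⁺ = max(z,0)`. -/
noncomputable def pospart (z : ℝ) : ℝ := max z 0

/-- Negative part `z⁻ = min(z,0)`. -/
noncomputable def negpart (z : ℝ) : ℝ := min z 0

/-- The two-dimensional discrete free energy
`E_Δ(ρ) = ΔxΔy·(∑ H(ρ_{ij}) + ∑ V_{ij}ρ_{ij} + (ΔxΔy/2)·∑ w(i−k,j−l)ρ_{ij}ρ_{kl})`. -/
noncomputable def Edisc2 (N : ℕ) (dx dy : ℝ) (H : ℝ → ℝ) (V : ℕ → ℕ → ℝ)
    (w : ℤ → ℤ → ℝ) (ρ : ℕ → ℕ → ℝ) : ℝ :=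
  dx * dy * ((∑ i ∈ Finset.Icc 1 N, ∑ j ∈ Finset.Icc 1 N, H (ρ i j))
    + (∑ i ∈ Finset.Icc 1 N, ∑ j ∈ Finset.Icc 1 N, V i j * ρ i j)
    + dx * dy / 2 * ∑ i ∈ Finset.Icc 1 N, ∑ j ∈ Finset.Icc 1 N,
        ∑ k ∈ Finset.Icc 1 N, ∑ l ∈ Finset.Icc 1 N,
          w ((i : ℤ) - (k : ℤ)) ((j : ℤ) - (l : ℤ)) * ρ i j * ρ k l)

/-- The kernel `w` is negative definite: `∑ w(i−k,j−l)(a_{ij}−b_{ij})(a_{kl}−b_{kl}) ≤ 0`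
for all matrices `a, b` with nonnegative entries. -/
def NegDefKer2 (N : ℕ) (w : ℤ → ℤ → ℝ) : Prop :=
  ∀ a b : ℕ → ℕ → ℝ,
    (∀ i j, 1 ≤ i → i ≤ N → 1 ≤ j → j ≤ N → 0 ≤ a i j) →
    (∀ i j, 1 ≤ i → i ≤ N → 1 ≤ j → j ≤ N → 0 ≤ b i j) →
    ∑ i ∈ Finset.Icc 1 N, ∑ j ∈ Finset.Icc 1 N,
      ∑ k ∈ Finset.Icc 1 N, ∑ l ∈ Finset.Icc 1 N,
        w ((i : ℤ) - (k : ℤ)) ((j : ℤ) - (l : ℤ))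
          * (a i j - b i j) * (a k l - b k l) ≤ 0

/-- The kernel `w` is positive definite: `∑ w(i−k,j−l)(a_{ij}−b_{ij})(a_{kl}−b_{kl}) ≥ 0`
for all matrices `a, b` with nonnegative entries. -/
def PosDefKer2 (N : ℕ) (w : ℤ → ℤ → ℝ) : Prop :=
  ∀ a b : ℕ → ℕ → ℝ,
    (∀ i j, 1 ≤ i → i ≤ N → 1 ≤ j → j ≤ N → 0 ≤ a i j) →
    (∀ i j, 1 ≤ i → i ≤ N → 1 ≤ j → j ≤ N → 0 ≤ b i j) →
    0 ≤ ∑ i ∈ Finset.Icc 1 N, ∑ j ∈ Finset.Icc 1 N,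
      ∑ k ∈ Finset.Icc 1 N, ∑ l ∈ Finset.Icc 1 N,
        w ((i : ℤ) - (k : ℤ)) ((j : ℤ) - (l : ℤ))
          * (a i j - b i j) * (a k l - b k l)

lemma pospart_nonneg (z : ℝ) : 0 ≤ pospart z := le_max_right _ _
lemma negpart_nonpos (z : ℝ) : negpart z ≤ 0 := min_le_right _ _

lemma mul_pospart_nonneg (z : ℝ) : 0 ≤ z * pospart z := by
  unfold pospart
  rcases le_total z 0 with h | h
  · rw [max_eq_right h]; simp
  · rw [max_eq_left h]; exact mul_nonneg h h

lemma mul_negpart_nonneg (z : ℝ) : 0 ≤ z * negpart z := by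
  unfold negpart
  rcases le_total z 0 with h | h
  · rw [min_eq_left h]; nlinarith
  · rw [min_eq_right h]; simp

lemma abel_sum (f g : ℕ → ℝ) (n : ℕ) :
    ∑ i ∈ Finset.Icc 1 (n+1), g i * (f i - f (i-1)) =
      g (n+1) * f (n+1) - g 1 * f 0 - ∑ i ∈ Finset.Icc 1 n, (g (i+1) - g i) * f i := by
  induction n with
  | zero => simp; ring
  | succ m ih =>
      rw [Finset.sum_Icc_succ_top (by omega : 1 ≤ m+1+1), ih,
          Finset.sum_Icc_succ_top (by omega : 1 ≤ m+1)]
      have h : m + 1 + 1 - 1 = m + 1 := by omega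
      rw [h]; ring

lemma tangent_line (H : ℝ → ℝ) (hc : ConvexOn ℝ Set.univ H) (hd : Differentiable ℝ H)
    (x y : ℝ) : H x - H y ≤ deriv H x * (x - y) := by
  rcases lt_trichotomy x y with h | h | h
  · have h1 := hc.deriv_le_slope (Set.mem_univ x) (Set.mem_univ y) h (hd x)
    rw [slope_def_field] at h1
    have hlt : 0 < y - x := by linarith
    rw [le_div_iff₀ hlt] at h1
    nlinarith
  · subst h; simp
  · have h1 := hc.slope_le_deriv (Set.mem_univ y) (Set.mem_univ x) h (hd x)
    rw [slope_def_field] at h1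
    have hlt : 0 < x - y := by linarith
    rw [div_le_iff₀ hlt] at h1
    nlinarith

lemma pos1D (N : ℕ) (hN : 1 ≤ N) (lam : ℝ) (hlam : 0 ≤ lam)
    (ρn ρ F u : ℕ → ℝ)
    (hF : ∀ i, 1 ≤ i → i + 1 ≤ N → F i = ρ i * pospart (u i) + ρ (i+1) * negpart (u i))
    (hF0 : F 0 = 0) (hFN : F N = 0)
    (hupd : ∀ i, 1 ≤ i → i ≤ N → ρ i = ρn i - lam * (F i - F (i-1)))
    (hpos : ∀ i, 1 ≤ i → i ≤ N → 0 ≤ ρn i) :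
    ∀ i, 1 ≤ i → i ≤ N → 0 ≤ ρ i := by
  by_contra hcon
  push_neg at hcon
  obtain ⟨m, hm1, hmN, hmneg⟩ := hcon
  obtain ⟨n, rfl⟩ : ∃ n, N = n + 1 := ⟨N - 1, by omega⟩
  set χ : ℕ → ℝ := fun i => if ρ i < 0 then 1 else 0 with hχ
  have hχdef : ∀ i, χ i = if ρ i < 0 then 1 else 0 := fun i => rfl
  have hkey : ∑ i ∈ Finset.Icc 1 (n+1), χ i * (F i - F (i-1)) ≤ 0 := by
    rw [abel_sum, hF0, hFN]
    have hS : 0 ≤ ∑ i ∈ Finset.Icc 1 n, (χ (i+1) - χ i) * F i := by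
      apply Finset.sum_nonneg
      intro i hi
      rw [Finset.mem_Icc] at hi
      rw [hF i hi.1 (by omega), hχdef i, hχdef (i+1)]
      have hp := pospart_nonneg (u i)
      have hq := negpart_nonpos (u i)
      rcases lt_or_ge (ρ i) 0 with h1 | h1 <;> rcases lt_or_ge (ρ (i+1)) 0 with h2 | h2
      · rw [if_pos h1, if_pos h2]; ring_nf; positivity
      · rw [if_pos h1, if_neg (not_lt.mpr h2)]; nlinarith
      · rw [if_neg (not_lt.mpr h1), if_pos h2]; nlinarith
      · rw [if_neg (not_lt.mpr h1), if_neg (not_lt.mpr h2)]; ring_nf; positivity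
    nlinarith
  have h2 : 0 ≤ ∑ i ∈ Finset.Icc 1 (n+1), χ i * ρn i := by
    apply Finset.sum_nonneg
    intro i hi
    rw [Finset.mem_Icc] at hi
    have := hpos i hi.1 hi.2
    rw [hχdef i]
    split <;> nlinarith
  have h3 : ∑ i ∈ Finset.Icc 1 (n+1), χ i * ρn i
      = (∑ i ∈ Finset.Icc 1 (n+1), χ i * ρ i)
        + lam * ∑ i ∈ Finset.Icc 1 (n+1), χ i * (F i - F (i-1)) := by
    rw [Finset.mul_sum, ← Finset.sum_add_distrib]
    refine Finset.sum_congr rfl fun i hi => ?_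
    rw [Finset.mem_Icc] at hi
    rw [hupd i hi.1 hi.2]
    ring
  have hm_mem : m ∈ Finset.Icc 1 (n+1) := Finset.mem_Icc.mpr ⟨hm1, hmN⟩
  have h4 : ∑ i ∈ Finset.Icc 1 (n+1), χ i * ρ i ≤ ρ m := by
    rw [← Finset.add_sum_erase _ _ hm_mem]
    have h5 : ∑ i ∈ (Finset.Icc 1 (n+1)).erase m, χ i * ρ i ≤ 0 := by
      apply Finset.sum_nonpos
      intro i _
      rw [hχdef i]
      split <;> rename_i h <;> [skip; simp] <;> nlinarith
    rw [hχdef m, if_pos hmneg]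
    linarith
  have h6 : lam * ∑ i ∈ Finset.Icc 1 (n+1), χ i * (F i - F (i-1)) ≤ 0 := by
    nlinarith
  linarith

lemma flux1D (N : ℕ) (hN : 1 ≤ N) (dx dt : ℝ) (hdx : 0 < dx) (hdt : 0 ≤ dt)
    (ρn ρ F u ξ : ℕ → ℝ)
    (hu : ∀ i, 1 ≤ i → i + 1 ≤ N → u i = -(ξ (i+1) - ξ i) / dx)
    (hF : ∀ i, 1 ≤ i → i + 1 ≤ N → F i = ρ i * pospart (u i) + ρ (i+1) * negpart (u i))
    (hF0 : F 0 = 0) (hFN : F N = 0)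
    (hupd : ∀ i, 1 ≤ i → i ≤ N → ρ i = ρn i - dt / dx * (F i - F (i-1)))
    (hρpos : ∀ i, 1 ≤ i → i ≤ N → 0 ≤ ρ i) :
    ∑ i ∈ Finset.Icc 1 N, ξ i * (ρ i - ρn i) ≤ 0 := by
  obtain ⟨n, rfl⟩ : ∃ n, N = n + 1 := ⟨N - 1, by omega⟩
  have h1 : ∑ i ∈ Finset.Icc 1 (n+1), ξ i * (ρ i - ρn i)
      = -(dt/dx) * ∑ i ∈ Finset.Icc 1 (n+1), ξ i * (F i - F (i-1)) := by
    rw [Finset.mul_sum]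
    refine Finset.sum_congr rfl fun i hi => ?_
    rw [Finset.mem_Icc] at hi
    rw [hupd i hi.1 hi.2]
    ring
  rw [h1, abel_sum, hF0, hFN]
  have hS : ∑ i ∈ Finset.Icc 1 n, (ξ (i+1) - ξ i) * F i ≤ 0 := by
    apply Finset.sum_nonpos
    intro i hi
    rw [Finset.mem_Icc] at hi
    have hu' := hu i hi.1 (by omega)
    have hΔ : ξ (i+1) - ξ i = -dx * u i := by rw [hu']; field_simp
    rw [hΔ, hF i hi.1 (by omega)]
    have h2 := mul_pospart_nonneg (u i)
    have h3 := mul_negpart_nonneg (u i)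
    have h4 := hρpos i hi.1 (by omega)
    have h5 := hρpos (i+1) (by omega) (by omega)
    nlinarith [mul_nonneg h4 h2, mul_nonneg h5 h3]
  have hfrac : 0 ≤ dt / dx := div_nonneg hdt hdx.le
  nlinarith

noncomputable def Qs (N : ℕ) (w : ℤ → ℤ → ℝ) (x y : ℕ → ℕ → ℝ) : ℝ :=
  ∑ i ∈ Finset.Icc 1 N, ∑ j ∈ Finset.Icc 1 N, ∑ k ∈ Finset.Icc 1 N, ∑ l ∈ Finset.Icc 1 N,
    w ((i : ℤ) - (k : ℤ)) ((j : ℤ) - (l : ℤ)) * x i j * y k l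

lemma sum4_comm (s : Finset ℕ) (f : ℕ → ℕ → ℕ → ℕ → ℝ) :
    ∑ i ∈ s, ∑ j ∈ s, ∑ k ∈ s, ∑ l ∈ s, f i j k l
      = ∑ k ∈ s, ∑ l ∈ s, ∑ i ∈ s, ∑ j ∈ s, f i j k l := by
  calc ∑ i ∈ s, ∑ j ∈ s, ∑ k ∈ s, ∑ l ∈ s, f i j k l
      = ∑ i ∈ s, ∑ k ∈ s, ∑ j ∈ s, ∑ l ∈ s, f i j k l :=
        Finset.sum_congr rfl fun i _ => Finset.sum_comm
    _ = ∑ k ∈ s, ∑ i ∈ s, ∑ j ∈ s, ∑ l ∈ s, f i j k l := Finset.sum_comm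
    _ = ∑ k ∈ s, ∑ i ∈ s, ∑ l ∈ s, ∑ j ∈ s, f i j k l :=
        Finset.sum_congr rfl fun k _ => Finset.sum_congr rfl fun i _ => Finset.sum_comm
    _ = ∑ k ∈ s, ∑ l ∈ s, ∑ i ∈ s, ∑ j ∈ s, f i j k l :=
        Finset.sum_congr rfl fun k _ => Finset.sum_comm

lemma Qs_symm (N : ℕ) (w : ℤ → ℤ → ℝ)
    (hw1 : ∀ p q : ℤ, w (-p) q = w p q) (hw2 : ∀ p q : ℤ, w p (-q) = w p q)
    (x y : ℕ → ℕ → ℝ) : Qs N w x y = Qs N w y x := by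
  unfold Qs
  rw [sum4_comm]
  refine Finset.sum_congr rfl fun k _ => Finset.sum_congr rfl fun l _ =>
    Finset.sum_congr rfl fun i _ => Finset.sum_congr rfl fun j _ => ?_
  have hw : w ((k : ℤ) - (i : ℤ)) ((l : ℤ) - (j : ℤ))
      = w ((i : ℤ) - (k : ℤ)) ((j : ℤ) - (l : ℤ)) := by
    rw [show (k : ℤ) - (i : ℤ) = -((i : ℤ) - (k : ℤ)) by ring,
        show (l : ℤ) - (j : ℤ) = -((j : ℤ) - (l : ℤ)) by ring, hw1, hw2]
  rw [hw]; ring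

lemma Estep (N : ℕ) (dx dy : ℝ) (hdx : 0 < dx) (hdy : 0 < dy)
    (H : ℝ → ℝ) (hHconv : ConvexOn ℝ Set.univ H) (hHdiff : Differentiable ℝ H)
    (V : ℕ → ℕ → ℝ) (w : ℤ → ℤ → ℝ)
    (hw1 : ∀ p q : ℤ, w (-p) q = w p q) (hw2 : ∀ p q : ℤ, w p (-q) = w p q)
    (b a ρs ξ : ℕ → ℕ → ℝ)
    (hξ : ∀ i j, 1 ≤ i → i ≤ N → 1 ≤ j → j ≤ N →
      ξ i j = deriv H (a i j) + V i j
        + dx * dy * ∑ k ∈ Finset.Icc 1 N, ∑ l ∈ Finset.Icc 1 N,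
            w ((i : ℤ) - (k : ℤ)) ((j : ℤ) - (l : ℤ)) * ρs k l)
    (hflux : ∑ i ∈ Finset.Icc 1 N, ∑ j ∈ Finset.Icc 1 N, ξ i j * (a i j - b i j) ≤ 0)
    (hcase :
      (∀ i j, 1 ≤ i → i ≤ N → 1 ≤ j → j ≤ N → ρs i j = (b i j + a i j) / 2) ∨
      ((∀ i j, 1 ≤ i → i ≤ N → 1 ≤ j → j ≤ N → ρs i j = b i j) ∧ NegDefKer2 N w) ∨
      ((∀ i j, 1 ≤ i → i ≤ N → 1 ≤ j → j ≤ N → ρs i j = a i j) ∧ PosDefKer2 N w))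
    (hapos : ∀ i j, 1 ≤ i → i ≤ N → 1 ≤ j → j ≤ N → 0 ≤ a i j)
    (hbpos : ∀ i j, 1 ≤ i → i ≤ N → 1 ≤ j → j ≤ N → 0 ≤ b i j) :
    Edisc2 N dx dy H V w a ≤ Edisc2 N dx dy H V w b := by
  -- quadratic expansion
  have hexp : Qs N w (fun i j => a i j - b i j) (fun i j => a i j + b i j)
      = Qs N w a a + Qs N w a b - (Qs N w b a + Qs N w b b) := by
    unfold Qs
    simp only [← Finset.sum_add_distrib, ← Finset.sum_sub_distrib]
    refine Finset.sum_congr rfl fun i _ => Finset.sum_congr rfl fun j _ =>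
      Finset.sum_congr rfl fun k _ => Finset.sum_congr rfl fun l _ => ?_
    ring
  have hsym : Qs N w a b = Qs N w b a := Qs_symm N w hw1 hw2 a b
  -- quadratic bound: Qaa - Qbb ≤ 2 * Qs d ρs
  have hQdiff : Qs N w a a - Qs N w b b
      ≤ 2 * Qs N w (fun i j => a i j - b i j) ρs := by
    rcases hcase with hv | ⟨hv, hker⟩ | ⟨hv, hker⟩
    · have he : Qs N w (fun i j => a i j - b i j) (fun i j => a i j + b i j)
          = 2 * Qs N w (fun i j => a i j - b i j) ρs := by
        unfold Qs
        simp only [Finset.mul_sum]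
        refine Finset.sum_congr rfl fun i _ => Finset.sum_congr rfl fun j _ =>
          Finset.sum_congr rfl fun k hk => Finset.sum_congr rfl fun l hl => ?_
        rw [Finset.mem_Icc] at hk hl
        rw [hv k l hk.1 hk.2 hl.1 hl.2]
        ring
      linarith
    · have he : Qs N w (fun i j => a i j - b i j) (fun i j => a i j + b i j)
          = 2 * Qs N w (fun i j => a i j - b i j) ρs
            + Qs N w (fun i j => a i j - b i j) (fun i j => a i j - b i j) := by
        unfold Qs
        simp only [Finset.mul_sum, ← Finset.sum_add_distrib]
        refine Finset.sum_congr rfl fun i _ => Finset.sum_congr rfl fun j _ =>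
          Finset.sum_congr rfl fun k hk => Finset.sum_congr rfl fun l hl => ?_
        rw [Finset.mem_Icc] at hk hl
        rw [hv k l hk.1 hk.2 hl.1 hl.2]
        ring
      have hneg : Qs N w (fun i j => a i j - b i j) (fun i j => a i j - b i j) ≤ 0 := by
        have := hker a b hapos hbpos
        simpa [Qs] using this
      linarith
    · have he : Qs N w (fun i j => a i j - b i j) (fun i j => a i j + b i j)
          = 2 * Qs N w (fun i j => a i j - b i j) ρs
            - Qs N w (fun i j => a i j - b i j) (fun i j => a i j - b i j) := by
        unfold Qs
        simp only [Finset.mul_sum, ← Finset.sum_sub_distrib]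
        refine Finset.sum_congr rfl fun i _ => Finset.sum_congr rfl fun j _ =>
          Finset.sum_congr rfl fun k hk => Finset.sum_congr rfl fun l hl => ?_
        rw [Finset.mem_Icc] at hk hl
        rw [hv k l hk.1 hk.2 hl.1 hl.2]
        ring
      have hpos : 0 ≤ Qs N w (fun i j => a i j - b i j) (fun i j => a i j - b i j) := by
        have := hker a b hapos hbpos
        simpa [Qs] using this
      linarith
  -- entropy bound
  have hH : (∑ i ∈ Finset.Icc 1 N, ∑ j ∈ Finset.Icc 1 N, H (a i j))
        - (∑ i ∈ Finset.Icc 1 N, ∑ j ∈ Finset.Icc 1 N, H (b i j))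
      ≤ ∑ i ∈ Finset.Icc 1 N, ∑ j ∈ Finset.Icc 1 N, deriv H (a i j) * (a i j - b i j) := by
    simp only [← Finset.sum_sub_distrib]
    refine Finset.sum_le_sum fun i _ => Finset.sum_le_sum fun j _ => ?_
    exact tangent_line H hHconv hHdiff (a i j) (b i j)
  -- potential identity
  have hV : (∑ i ∈ Finset.Icc 1 N, ∑ j ∈ Finset.Icc 1 N, V i j * a i j)
        - (∑ i ∈ Finset.Icc 1 N, ∑ j ∈ Finset.Icc 1 N, V i j * b i j)
      = ∑ i ∈ Finset.Icc 1 N, ∑ j ∈ Finset.Icc 1 N, V i j * (a i j - b i j) := by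
    simp only [← Finset.sum_sub_distrib]
    refine Finset.sum_congr rfl fun i _ => Finset.sum_congr rfl fun j _ => ?_
    ring
  -- key identity: flux sum expansion
  have hkey : ∑ i ∈ Finset.Icc 1 N, ∑ j ∈ Finset.Icc 1 N, ξ i j * (a i j - b i j)
      = (∑ i ∈ Finset.Icc 1 N, ∑ j ∈ Finset.Icc 1 N, deriv H (a i j) * (a i j - b i j))
        + (∑ i ∈ Finset.Icc 1 N, ∑ j ∈ Finset.Icc 1 N, V i j * (a i j - b i j))
        + dx * dy * Qs N w (fun i j => a i j - b i j) ρs := by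
    have h1 : ∑ i ∈ Finset.Icc 1 N, ∑ j ∈ Finset.Icc 1 N, ξ i j * (a i j - b i j)
        = ∑ i ∈ Finset.Icc 1 N, ∑ j ∈ Finset.Icc 1 N,
            (deriv H (a i j) * (a i j - b i j) + V i j * (a i j - b i j)
              + (dx * dy * ∑ k ∈ Finset.Icc 1 N, ∑ l ∈ Finset.Icc 1 N,
                  w ((i : ℤ) - (k : ℤ)) ((j : ℤ) - (l : ℤ)) * ρs k l) * (a i j - b i j)) := by
      refine Finset.sum_congr rfl fun i hi => Finset.sum_congr rfl fun j hj => ?_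
      rw [Finset.mem_Icc] at hi hj
      rw [hξ i j hi.1 hi.2 hj.1 hj.2]
      ring
    have h2 : ∑ i ∈ Finset.Icc 1 N, ∑ j ∈ Finset.Icc 1 N,
          (dx * dy * ∑ k ∈ Finset.Icc 1 N, ∑ l ∈ Finset.Icc 1 N,
              w ((i : ℤ) - (k : ℤ)) ((j : ℤ) - (l : ℤ)) * ρs k l) * (a i j - b i j)
        = dx * dy * Qs N w (fun i j => a i j - b i j) ρs := by
      unfold Qs
      simp only [Finset.mul_sum, Finset.sum_mul]
      refine Finset.sum_congr rfl fun i _ => Finset.sum_congr rfl fun j _ =>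
        Finset.sum_congr rfl fun k _ => Finset.sum_congr rfl fun l _ => ?_
      ring
    rw [h1]
    simp only [Finset.sum_add_distrib]
    rw [h2]
  -- assemble
  have hEa : Edisc2 N dx dy H V w a
      = dx * dy * ((∑ i ∈ Finset.Icc 1 N, ∑ j ∈ Finset.Icc 1 N, H (a i j))
        + (∑ i ∈ Finset.Icc 1 N, ∑ j ∈ Finset.Icc 1 N, V i j * a i j)
        + dx * dy / 2 * Qs N w a a) := rfl
  have hEb : Edisc2 N dx dy H V w b
      = dx * dy * ((∑ i ∈ Finset.Icc 1 N, ∑ j ∈ Finset.Icc 1 N, H (b i j))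
        + (∑ i ∈ Finset.Icc 1 N, ∑ j ∈ Finset.Icc 1 N, V i j * b i j)
        + dx * dy / 2 * Qs N w b b) := rfl
  rw [hEa, hEb]
  have hdxdy : (0:ℝ) ≤ dx * dy := mul_nonneg hdx.le hdy.le
  apply mul_le_mul_of_nonneg_left _ hdxdy
  nlinarith [mul_le_mul_of_nonneg_left hQdiff (by positivity : (0:ℝ) ≤ dx * dy / 2)]

/-- unconditional energy dissipation for the two-dimensional
dimensionally-split implicit scheme S2, for each of the three admissible choices of the
convolution variables `ρ**` and `ρ***`, with no CFL restriction on `Δt`. -/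
theorem stmt_13 (N : ℕ) (hN : 2 ≤ N) (dx dy dt : ℝ)
    (hdx : 0 < dx) (hdy : 0 < dy) (hdt : 0 < dt)
    (H : ℝ → ℝ) (hHconv : ConvexOn ℝ Set.univ H) (hHdiff : Differentiable ℝ H)
    (V : ℕ → ℕ → ℝ) (w : ℤ → ℤ → ℝ)
    (hw1 : ∀ p q : ℤ, w (-p) q = w p q) (hw2 : ∀ p q : ℤ, w p (-q) = w p q)
    (ρn ρh ρn1 ρss ρsss ξh ξ1 u v F G : ℕ → ℕ → ℝ)
    -- Step 1: implicit evolution in the x-direction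
    (hξh : ∀ i j, 1 ≤ i → i ≤ N → 1 ≤ j → j ≤ N →
      ξh i j = deriv H (ρh i j) + V i j
        + dx * dy * ∑ k ∈ Finset.Icc 1 N, ∑ l ∈ Finset.Icc 1 N,
            w ((i : ℤ) - (k : ℤ)) ((j : ℤ) - (l : ℤ)) * ρss k l)
    (hu : ∀ i j, 1 ≤ i → i ≤ N - 1 → 1 ≤ j → j ≤ N →
      u i j = -(ξh (i + 1) j - ξh i j) / dx)
    (hF : ∀ i j, 1 ≤ i → i ≤ N - 1 → 1 ≤ j → j ≤ N →
      F i j = ρh i j * pospart (u i j) + ρh (i + 1) j * negpart (u i j))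
    (hF0 : ∀ j, 1 ≤ j → j ≤ N → F 0 j = 0)
    (hFN : ∀ j, 1 ≤ j → j ≤ N → F N j = 0)
    (hupd1 : ∀ i j, 1 ≤ i → i ≤ N → 1 ≤ j → j ≤ N →
      ρh i j = ρn i j - dt / dx * (F i j - F (i - 1) j))
    -- Step 2: implicit evolution in the y-direction
    (hξ1 : ∀ i j, 1 ≤ i → i ≤ N → 1 ≤ j → j ≤ N →
      ξ1 i j = deriv H (ρn1 i j) + V i j
        + dx * dy * ∑ k ∈ Finset.Icc 1 N, ∑ l ∈ Finset.Icc 1 N,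
            w ((i : ℤ) - (k : ℤ)) ((j : ℤ) - (l : ℤ)) * ρsss k l)
    (hv : ∀ i j, 1 ≤ i → i ≤ N → 1 ≤ j → j ≤ N - 1 →
      v i j = -(ξ1 i (j + 1) - ξ1 i j) / dy)
    (hG : ∀ i j, 1 ≤ i → i ≤ N → 1 ≤ j → j ≤ N - 1 →
      G i j = ρn1 i j * pospart (v i j) + ρn1 i (j + 1) * negpart (v i j))
    (hG0 : ∀ i, 1 ≤ i → i ≤ N → G i 0 = 0)
    (hGN : ∀ i, 1 ≤ i → i ≤ N → G i N = 0)
    (hupd2 : ∀ i j, 1 ≤ i → i ≤ N → 1 ≤ j → j ≤ N →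
      ρn1 i j = ρh i j - dt / dy * (G i j - G i (j - 1)))
    (hpos : ∀ i j, 1 ≤ i → i ≤ N → 1 ≤ j → j ≤ N → 0 ≤ ρn i j)
    (hcase :
      ((∀ i j, 1 ≤ i → i ≤ N → 1 ≤ j → j ≤ N → ρss i j = (ρn i j + ρh i j) / 2) ∧
        (∀ i j, 1 ≤ i → i ≤ N → 1 ≤ j → j ≤ N → ρsss i j = (ρh i j + ρn1 i j) / 2)) ∨
      ((∀ i j, 1 ≤ i → i ≤ N → 1 ≤ j → j ≤ N → ρss i j = ρn i j) ∧
        (∀ i j, 1 ≤ i → i ≤ N → 1 ≤ j → j ≤ N → ρsss i j = ρh i j) ∧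
        NegDefKer2 N w) ∨
      ((∀ i j, 1 ≤ i → i ≤ N → 1 ≤ j → j ≤ N → ρss i j = ρh i j) ∧
        (∀ i j, 1 ≤ i → i ≤ N → 1 ≤ j → j ≤ N → ρsss i j = ρn1 i j) ∧
        PosDefKer2 N w)) :
    Edisc2 N dx dy H V w ρn1 ≤ Edisc2 N dx dy H V w ρn := by
  have hN1 : 1 ≤ N := by omega
  -- positivity of ρh (row by row, x-direction)
  have hρh : ∀ i j, 1 ≤ i → i ≤ N → 1 ≤ j → j ≤ N → 0 ≤ ρh i j := by
    intro i j hi1 hiN hj1 hjN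
    exact pos1D N hN1 (dt/dx) (div_nonneg hdt.le hdx.le)
      (fun i => ρn i j) (fun i => ρh i j) (fun i => F i j) (fun i => u i j)
      (fun i h1 h2 => hF i j h1 (by omega) hj1 hjN)
      (hF0 j hj1 hjN) (hFN j hj1 hjN)
      (fun i h1 h2 => hupd1 i j h1 h2 hj1 hjN)
      (fun i h1 h2 => hpos i j h1 h2 hj1 hjN) i hi1 hiN
  -- positivity of ρn1 (column by column, y-direction)
  have hρn1 : ∀ i j, 1 ≤ i → i ≤ N → 1 ≤ j → j ≤ N → 0 ≤ ρn1 i j := by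
    intro i j hi1 hiN hj1 hjN
    exact pos1D N hN1 (dt/dy) (div_nonneg hdt.le hdy.le)
      (fun j => ρh i j) (fun j => ρn1 i j) (fun j => G i j) (fun j => v i j)
      (fun j h1 h2 => hG i j hi1 hiN h1 (by omega))
      (hG0 i hi1 hiN) (hGN i hi1 hiN)
      (fun j h1 h2 => hupd2 i j hi1 hiN h1 h2)
      (fun j h1 h2 => hρh i j hi1 hiN h1 h2) j hj1 hjN
  -- flux inequality, step 1
  have hflux1 : ∑ i ∈ Finset.Icc 1 N, ∑ j ∈ Finset.Icc 1 N,
      ξh i j * (ρh i j - ρn i j) ≤ 0 := by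
    rw [Finset.sum_comm]
    apply Finset.sum_nonpos
    intro j hj
    rw [Finset.mem_Icc] at hj
    exact flux1D N hN1 dx dt hdx hdt.le
      (fun i => ρn i j) (fun i => ρh i j) (fun i => F i j) (fun i => u i j)
      (fun i => ξh i j)
      (fun i h1 h2 => hu i j h1 (by omega) hj.1 hj.2)
      (fun i h1 h2 => hF i j h1 (by omega) hj.1 hj.2)
      (hF0 j hj.1 hj.2) (hFN j hj.1 hj.2)
      (fun i h1 h2 => hupd1 i j h1 h2 hj.1 hj.2)
      (fun i h1 h2 => hρh i j h1 h2 hj.1 hj.2)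
  -- flux inequality, step 2
  have hflux2 : ∑ i ∈ Finset.Icc 1 N, ∑ j ∈ Finset.Icc 1 N,
      ξ1 i j * (ρn1 i j - ρh i j) ≤ 0 := by
    apply Finset.sum_nonpos
    intro i hi
    rw [Finset.mem_Icc] at hi
    exact flux1D N hN1 dy dt hdy hdt.le
      (fun j => ρh i j) (fun j => ρn1 i j) (fun j => G i j) (fun j => v i j)
      (fun j => ξ1 i j)
      (fun j h1 h2 => hv i j hi.1 hi.2 h1 (by omega))
      (fun j h1 h2 => hG i j hi.1 hi.2 h1 (by omega))
      (hG0 i hi.1 hi.2) (hGN i hi.1 hi.2)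
      (fun j h1 h2 => hupd2 i j hi.1 hi.2 h1 h2)
      (fun j h1 h2 => hρn1 i j hi.1 hi.2 h1 h2)
  -- two applications of the one-step energy estimate
  have case1 :
      (∀ i j, 1 ≤ i → i ≤ N → 1 ≤ j → j ≤ N → ρss i j = (ρn i j + ρh i j) / 2) ∨
      ((∀ i j, 1 ≤ i → i ≤ N → 1 ≤ j → j ≤ N → ρss i j = ρn i j) ∧ NegDefKer2 N w) ∨
      ((∀ i j, 1 ≤ i → i ≤ N → 1 ≤ j → j ≤ N → ρss i j = ρh i j) ∧ PosDefKer2 N w) := by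
    rcases hcase with ⟨h1, h2⟩ | ⟨h1, h2, hker⟩ | ⟨h1, h2, hker⟩
    · exact Or.inl h1
    · exact Or.inr (Or.inl ⟨h1, hker⟩)
    · exact Or.inr (Or.inr ⟨h1, hker⟩)
  have case2 :
      (∀ i j, 1 ≤ i → i ≤ N → 1 ≤ j → j ≤ N → ρsss i j = (ρh i j + ρn1 i j) / 2) ∨
      ((∀ i j, 1 ≤ i → i ≤ N → 1 ≤ j → j ≤ N → ρsss i j = ρh i j) ∧ NegDefKer2 N w) ∨
      ((∀ i j, 1 ≤ i → i ≤ N → 1 ≤ j → j ≤ N → ρsss i j = ρn1 i j) ∧ PosDefKer2 N w) := by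
    rcases hcase with ⟨h1, h2⟩ | ⟨h1, h2, hker⟩ | ⟨h1, h2, hker⟩
    · exact Or.inl h2
    · exact Or.inr (Or.inl ⟨h2, hker⟩)
    · exact Or.inr (Or.inr ⟨h2, hker⟩)
  have step1 : Edisc2 N dx dy H V w ρh ≤ Edisc2 N dx dy H V w ρn :=
    Estep N dx dy hdx hdy H hHconv hHdiff V w hw1 hw2 ρn ρh ρss ξh hξh hflux1
      case1 hρh hpos
  have step2 : Edisc2 N dx dy H V w ρn1 ≤ Edisc2 N dx dy H V w ρh :=
    Estep N dx dy hdx hdy H hHconv hHdiff V w hw1 hw2 ρh ρn1 ρsss ξ1 hξ1 hflux2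
      case2 hρn1 hρh
  exact le_trans step2 step1
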